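/- Let w be a balanced infinite word over {a,b} starting with the letter a and containing no factor bb. Then w can be decomposed over {a, ab}, i.e., w = L_a(w') for some infinite word w', and w' is balanced. -/

import Mathlib

set_option linter.unnecessarySeqFocus false


universe u
variable {A : Type u}

/-- Apply a substitution (given by images of letters) to a finite word. -/
def applyList (f : A → List A) (u : List A) : List A := u.flatMap f

/-- Starting position of the image of the `n`-th letter of `v` inside `f(v)`. -/
def blockStart (f : A → List A) (v : ℕ → A) : ℕ → ℕ
  | 0 => 0
  | n + 1 => blockStart f v n + (f (v n)).length

/-- `ApplyEq f v u` means `u = f(v)` for right-infinite words. -/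
def ApplyEq (f : A → List A) (v u : ℕ → A) : Prop :=
  ∀ (n i : ℕ) (h : i < (f (v n)).length),
    u (blockStart f v n + i) = (f (v n))[i]

/-- `u` occurs as a factor of `w` at position `k`. -/
def FactorAt (w : ℕ → A) (u : List A) (k : ℕ) : Prop :=
  ∀ (i : ℕ) (h : i < u.length), u[i] = w (k + i)

def Factor (w : ℕ → A) (u : List A) : Prop := ∃ k, FactorAt w u k

/-- `u` is a prefix of the infinite word `w`. -/
def PrefixOf (u : List A) (w : ℕ → A) : Prop :=
  ∀ (i : ℕ) (h : i < u.length), u[i] = w i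

/-- Membership in the stable set of a set `S` of substitutions. -/
def InStable (S : Set (A → List A)) (w : ℕ → A) : Prop :=
  ∃ (σ : ℕ → A → List A) (ws : ℕ → ℕ → A),
    (∀ n, σ n ∈ S) ∧ ws 0 = w ∧ ∀ n, ApplyEq (σ n) (ws (n + 1)) (ws n)

/-- Composition `σ_1 ∘ ⋯ ∘ σ_n` of the first `n` substitutions of `s` (0-indexed). -/
def compSeq (s : ℕ → A → List A) : ℕ → A → List A
  | 0 => fun a => [a]
  | n + 1 => fun a => applyList (compSeq s n) (s n a)

/-- `w` is S-adic with directive sequence `σ`. -/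
def SAdicWith (σ : ℕ → A → List A) (w : ℕ → A) : Prop :=
  ∃ a : ℕ → A, (∀ n, PrefixOf (compSeq σ n (a n)) w) ∧
    ∀ N : ℕ, ∃ n, N ≤ (compSeq σ n (a n)).length



-- Binary alphabet: letter `a` is `false`, letter `b` is `true`.
def La : Bool → List Bool | false => [false] | true => [false, true]
def Lb : Bool → List Bool | false => [true, false] | true => [true]
def Ra : Bool → List Bool | false => [false] | true => [true, false]
def Rb : Bool → List Bool | false => [false, true] | true => [true]

/-- An infinite word is balanced. -/
def IsBalanced (w : ℕ → Bool) : Prop :=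
  ∀ (c : Bool) (u v : List Bool), Factor w u → Factor w v → u.length = v.length →
    |(u.count c : ℤ) - (v.count c : ℤ)| ≤ 1


namespace Stmt4Aux

def cnt (v : ℕ → Bool) : ℕ → ℕ → ℕ
  | _, 0 => 0
  | k, n+1 => (bif v k then 1 else 0) + cnt v (k+1) n

lemma cnt_succ (v : ℕ → Bool) (k n : ℕ) :
    cnt v k (n+1) = (bif v k then 1 else 0) + cnt v (k+1) n := rfl

lemma cnt_add (v : ℕ → Bool) : ∀ (m : ℕ) (k j : ℕ),
    cnt v k (m+j) = cnt v k m + cnt v (k+m) j := by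
  intro m
  induction m with
  | zero => intro k j; simp [cnt]
  | succ m ih =>
    intro k j
    have h1 : m + 1 + j = (m + j) + 1 := by omega
    rw [h1, cnt_succ, cnt_succ, ih (k+1) j]
    have h2 : k + 1 + m = k + (m+1) := by omega
    rw [h2]; omega

lemma cnt_succ_right (v : ℕ → Bool) (k n : ℕ) :
    cnt v k (n+1) = cnt v k n + (bif v (k+n) then 1 else 0) := by
  have := cnt_add v n k 1
  simpa [cnt] using this

lemma cnt_le (v : ℕ → Bool) : ∀ n k, cnt v k n ≤ n := by
  intro n
  induction n with
  | zero => intro k; simp [cnt]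
  | succ n ih =>
    intro k
    rw [cnt_succ]
    have := ih (k+1)
    cases v k <;> simp <;> omega

lemma cnt_congr (v : ℕ → Bool) : ∀ n k l, (∀ j, j < n → v (k+j) = v (l+j)) →
    cnt v k n = cnt v l n := by
  intro n
  induction n with
  | zero => intro k l _; rfl
  | succ n ih =>
    intro k l h
    rw [cnt_succ, cnt_succ]
    have h0 : v k = v l := by have := h 0 (by omega); simpa using this
    rw [h0, ih (k+1) (l+1) (fun j hj => by
      have := h (j+1) (by omega)
      have e1 : k + (j+1) = k + 1 + j := by omega
      have e2 : l + (j+1) = l + 1 + j := by omega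
      rw [e1, e2] at this; exact this)]

lemma factor_count (v : ℕ → Bool) : ∀ (u : List Bool) (k : ℕ), FactorAt v u k →
    u.count true = cnt v k u.length := by
  intro u
  induction u with
  | nil => intro k _; simp [cnt]
  | cons x u ih =>
    intro k h
    have hx : x = v k := by have := h 0 (by simp); simpa using this
    have htail : FactorAt v u (k+1) := by
      intro i hi
      have := h (i+1) (by simp; omega)
      have e : k + (i+1) = k + 1 + i := by omega
      rw [e] at this; simpa using this
    rw [List.length_cons, cnt_succ, ← ih (k+1) htail, List.count_cons, ← hx]
    cases x <;> simp <;> omega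

lemma bif_eq_one {c : Bool} (h : (bif c then 1 else 0) = 1) : c = true := by
  cases c <;> simp_all

lemma bif_eq_zero {c : Bool} (h : (bif c then 1 else 0) = 0) : c = false := by
  cases c <;> simp_all

lemma count_tf (u : List Bool) : u.count true + u.count false = u.length := by
  induction u with
  | nil => simp
  | cons x u ih => cases x <;> simp [List.count_cons] <;> omega

lemma bif_le_one (c : Bool) : (bif c then 1 else 0) ≤ 1 := by cases c <;> simp

lemma factorAt_cons {v : ℕ → Bool} {x : Bool} {u : List Bool} {k : ℕ}
    (hx : v k = x) (h : FactorAt v u (k+1)) : FactorAt v (x :: u) k := by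
  intro i hi
  cases i with
  | zero => simpa using hx.symm
  | succ j =>
    rw [List.getElem_cons_succ]
    have hj : j < u.length := by simp at hi; omega
    have := h j hj
    rw [this]
    congr 1
    omega

lemma factorAt_concat {v : ℕ → Bool} {u : List Bool} {x : Bool} {k : ℕ}
    (h : FactorAt v u k) (hx : v (k + u.length) = x) : FactorAt v (u ++ [x]) k := by
  intro i hi
  simp only [List.length_append, List.length_singleton] at hi
  by_cases hiu : i < u.length
  · rw [List.getElem_append_left hiu]
    exact h i hiu
  · have he : i = u.length := by omega
    subst he
    rw [List.getElem_append_right (le_refl _)]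
    simpa using hx.symm

lemma factorAt_ofFn (v : ℕ → Bool) (k m : ℕ) :
    FactorAt v (List.ofFn (fun j : Fin m => v (k+(j:ℕ)))) k := by
  intro i hi
  have him : i < m := by simpa using hi
  rw [List.getElem_ofFn]

theorem key (v : ℕ → Bool) (hP : ∃ n, ∃ k l, cnt v l n + 2 ≤ cnt v k n) :
    ∃ t : List Bool, Factor v (false :: (t ++ [false])) ∧ Factor v (true :: (t ++ [true])) := by
  classical
  obtain ⟨k, l, hkl⟩ := Nat.find_spec hP
  have hn2 : 2 ≤ Nat.find hP := by
    have h1 := cnt_le v (Nat.find hP) k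
    omega
  obtain ⟨m, em⟩ : ∃ m, Nat.find hP = m + 2 := ⟨Nat.find hP - 2, by omega⟩
  rw [em] at hkl
  have hmin : ∀ mm, mm < m + 2 → ∀ k' l', ¬ (cnt v l' mm + 2 ≤ cnt v k' mm) := by
    intro mm hmm k' l' hc
    exact Nat.find_min hP (by omega) ⟨k', l', hc⟩
  have ek2 : cnt v k (m+2) =
      (bif v k then 1 else 0) + (cnt v (k+1) m + (bif v (k+1+m) then 1 else 0)) := by
    rw [cnt_succ, cnt_succ_right]
  have el2 : cnt v l (m+2) =
      (bif v l then 1 else 0) + (cnt v (l+1) m + (bif v (l+1+m) then 1 else 0)) := by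
    rw [cnt_succ, cnt_succ_right]
  have h1 : ¬ (cnt v (l+1) m + (bif v (l+1+m) then 1 else 0) + 2 ≤
      cnt v (k+1) m + (bif v (k+1+m) then 1 else 0)) := by
    have := hmin (m+1) (by omega) (k+1) (l+1)
    rwa [cnt_succ_right, cnt_succ_right] at this
  have h2 : ¬ ((bif v l then 1 else 0) + cnt v (l+1) m + 2 ≤
      (bif v k then 1 else 0) + cnt v (k+1) m) := by
    have := hmin (m+1) (by omega) k l
    rwa [cnt_succ, cnt_succ] at this
  have Hk : (bif v k then 1 else 0) = 1 ∧ (bif v l then 1 else 0) = 0 ∧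
      (bif v (k+1+m) then 1 else 0) = 1 ∧ (bif v (l+1+m) then 1 else 0) = 0 := by
    have c1 := bif_le_one (v k); have c2 := bif_le_one (v l)
    have c3 := bif_le_one (v (k+1+m)); have c4 := bif_le_one (v (l+1+m))
    omega
  have hvk : v k = true := bif_eq_one Hk.1
  have hvl : v l = false := bif_eq_zero Hk.2.1
  have hvk1 : v (k+1+m) = true := bif_eq_one Hk.2.2.1
  have hvl1 : v (l+1+m) = false := bif_eq_zero Hk.2.2.2
  have hmid : ∀ i, i < m → v (k+1+i) = v (l+1+i) := by
    by_contra hc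
    push_neg at hc
    obtain ⟨i, him, hne, hmini⟩ : ∃ i, i < m ∧ v (k+1+i) ≠ v (l+1+i) ∧
        ∀ j, j < i → v (k+1+j) = v (l+1+j) := by
      refine ⟨Nat.find hc, (Nat.find_spec hc).1, (Nat.find_spec hc).2, ?_⟩
      intro j hj
      have h3 := Nat.find_min hc hj
      have hjm : j < m := lt_trans hj (Nat.find_spec hc).1
      by_contra hcc
      exact h3 ⟨hjm, hcc⟩
    have hceq : cnt v (k+1) i = cnt v (l+1) i := cnt_congr v i (k+1) (l+1) hmini
    have pk : cnt v k (i+2) =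
        (bif v k then 1 else 0) + (cnt v (k+1) i + (bif v (k+1+i) then 1 else 0)) := by
      rw [cnt_succ, cnt_succ_right]
    have pl : cnt v l (i+2) =
        (bif v l then 1 else 0) + (cnt v (l+1) i + (bif v (l+1+i) then 1 else 0)) := by
      rw [cnt_succ, cnt_succ_right]
    cases hvi : v (k+1+i) with
    | true =>
      have hvli : v (l+1+i) = false := by
        cases hvli : v (l+1+i)
        · rfl
        · exact absurd (hvi.trans hvli.symm) hne
      refine hmin (i+2) (by omega) k l ?_
      rw [pk, pl, hvk, hvl, hvi, hvli, hceq]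
      simp
      omega
    | false =>
      have hvli : v (l+1+i) = true := by
        cases hvli : v (l+1+i)
        · exact absurd (hvi.trans hvli.symm) hne
        · rfl
      refine hmin (m-i) (by omega) (k+(i+2)) (l+(i+2)) ?_
      have sk : cnt v k (m+2) = cnt v k (i+2) + cnt v (k+(i+2)) (m-i) := by
        have h4 := cnt_add v (i+2) k (m-i)
        rw [show i+2+(m-i) = m+2 by omega] at h4
        exact h4
      have sl : cnt v l (m+2) = cnt v l (i+2) + cnt v (l+(i+2)) (m-i) := by
        have h4 := cnt_add v (i+2) l (m-i)
        rw [show i+2+(m-i) = m+2 by omega] at h4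
        exact h4
      rw [pk, hvk, hvi] at sk
      rw [pl, hvl, hvli] at sl
      simp at sk sl
      omega
  -- construct t
  refine ⟨List.ofFn (fun j : Fin m => v (k+1+(j:ℕ))), ⟨l, ?_⟩, ⟨k, ?_⟩⟩
  · have ht : List.ofFn (fun j : Fin m => v (k+1+(j:ℕ))) =
        List.ofFn (fun j : Fin m => v (l+1+(j:ℕ))) := by
      congr 1
      funext j
      exact hmid j j.isLt
    rw [ht]
    refine factorAt_cons hvl (factorAt_concat (factorAt_ofFn v (l+1) m) ?_)
    rw [List.length_ofFn]
    exact hvl1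
  · refine factorAt_cons hvk (factorAt_concat (factorAt_ofFn v (k+1) m) ?_)
    rw [List.length_ofFn]
    exact hvk1


theorem exists_pattern (v : ℕ → Bool) (hv : ¬ IsBalanced v) :
    ∃ t : List Bool, Factor v (false :: (t ++ [false])) ∧ Factor v (true :: (t ++ [true])) := by
  apply key v
  unfold IsBalanced at hv
  push_neg at hv
  obtain ⟨c, u, u2, ⟨k, hk⟩, ⟨l, hl⟩, hlen, habs⟩ := hv
  have h1 : u.count true = cnt v k u.length := factor_count v u k hk
  have h2 : u2.count true = cnt v l u2.length := factor_count v u2 l hl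
  rw [← hlen] at h2
  have ht : u.count true + u.count false = u.length := count_tf u
  have ht2 : u2.count true + u2.count false = u2.length := count_tf u2
  rw [← hlen] at ht2
  refine ⟨u.length, ?_⟩
  rcases lt_abs.mp habs with h | h
  · cases c
    · exact ⟨l, k, by omega⟩
    · exact ⟨k, l, by omega⟩
  · cases c
    · exact ⟨k, l, by omega⟩
    · exact ⟨l, k, by omega⟩

-- ## decomposition of w
variable (w : ℕ → Bool)

def bp : ℕ → ℕ
  | 0 => 0
  | n+1 => bp n + (bif w (bp n + 1) then 2 else 1)

def dw (n : ℕ) : Bool := w (bp w n + 1)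

variable {w}

lemma wfalse (h0 : w 0 = false) (hbb : ¬ Factor w [true, true]) :
    ∀ n, w (bp w n) = false := by
  intro n
  induction n with
  | zero => exact h0
  | succ n ih =>
    cases hb : w (bp w n + 1)
    · show w (bp w (n+1)) = false
      rw [show bp w (n+1) = bp w n + (bif w (bp w n + 1) then 2 else 1) from rfl, hb]
      simpa using hb
    · show w (bp w (n+1)) = false
      rw [show bp w (n+1) = bp w n + (bif w (bp w n + 1) then 2 else 1) from rfl, hb]
      simp only [cond_true]
      cases hc : w (bp w n + 2)
      · rfl
      · exfalso
        apply hbb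
        refine ⟨bp w n + 1, ?_⟩
        intro i hi
        have : i = 0 ∨ i = 1 := by simp at hi; omega
        rcases this with rfl | rfl
        · simpa using hb.symm
        · rw [show bp w n + 1 + 1 = bp w n + 2 from rfl, hc]; rfl

lemma bp_succ (n : ℕ) : bp w (n+1) = bp w n + (La (dw w n)).length := by
  rw [show bp w (n+1) = bp w n + (bif w (bp w n + 1) then 2 else 1) from rfl]
  unfold dw
  cases hb : w (bp w n + 1) <;> simp [hb, La]

lemma blockStart_eq (n : ℕ) : blockStart La (dw w) n = bp w n := by
  induction n with
  | zero => rfl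
  | succ n ih =>
    rw [show blockStart La (dw w) (n+1) = blockStart La (dw w) n + (La (dw w n)).length
      from rfl, ih, bp_succ]

lemma factorAt_block (h0 : w 0 = false) (hbb : ¬ Factor w [true, true]) (n : ℕ) :
    FactorAt w (La (dw w n)) (bp w n) := by
  intro i hi
  revert hi
  cases hb : dw w n <;> intro hi
  · simp only [La, List.length_cons, List.length_nil] at hi
    have : i = 0 := by omega
    subst this
    simpa [hb, La] using (wfalse h0 hbb n).symm
  · simp only [La, List.length_cons, List.length_nil] at hi
    have : i = 0 ∨ i = 1 := by omega
    rcases this with rfl | rfl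
    · simpa [hb, La] using (wfalse h0 hbb n).symm
    · have hb' : w (bp w n + 1) = true := hb
      simp [hb, La, hb']

lemma apply_eq (h0 : w 0 = false) (hbb : ¬ Factor w [true, true]) :
    ApplyEq La (dw w) w := by
  intro n i hi
  rw [blockStart_eq]
  exact (factorAt_block h0 hbb n i hi).symm

lemma factorAt_tail {v : ℕ → Bool} {x : Bool} {u : List Bool} {k : ℕ}
    (h : FactorAt v (x :: u) k) : FactorAt v u (k+1) := by
  intro i hi
  have := h (i+1) (by simp; omega)
  rw [List.getElem_cons_succ] at this
  rw [this]
  congr 1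
  omega

lemma factorAt_append_left {v : ℕ → Bool} {u u2 : List Bool} {k : ℕ}
    (h : FactorAt v (u ++ u2) k) : FactorAt v u k := by
  intro i hi
  have := h i (by simp; omega)
  rwa [List.getElem_append_left hi] at this

lemma factorAt_append {v : ℕ → Bool} {u u2 : List Bool} {k : ℕ}
    (h1 : FactorAt v u k) (h2 : FactorAt v u2 (k + u.length)) : FactorAt v (u ++ u2) k := by
  intro i hi
  simp only [List.length_append] at hi
  by_cases hiu : i < u.length
  · rw [List.getElem_append_left hiu]
    exact h1 i hiu
  · rw [List.getElem_append_right (by omega)]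
    have := h2 (i - u.length) (by omega)
    rw [this]
    congr 1
    omega

lemma image_factorAt (h0 : w 0 = false) (hbb : ¬ Factor w [true, true]) :
    ∀ (u : List Bool) (k : ℕ), FactorAt (dw w) u k →
      FactorAt w (applyList La u ++ [false]) (bp w k) := by
  intro u
  induction u with
  | nil =>
    intro k _ i hi
    simp only [applyList, List.flatMap_nil, List.nil_append, List.length_singleton] at hi
    have : i = 0 := by omega
    subst this
    simpa [applyList] using (wfalse h0 hbb k).symm
  | cons x u ih =>
    intro k h
    have hx : x = dw w k := by have := h 0 (by simp); simpa using this
    have htail : FactorAt (dw w) u (k+1) := factorAt_tail h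
    have hrest := ih (k+1) htail
    rw [bp_succ] at hrest
    have he : applyList La (x :: u) ++ [false] = La x ++ (applyList La u ++ [false]) := by
      simp [applyList]
    rw [he, hx]
    exact factorAt_append (factorAt_block h0 hbb k) hrest

end Stmt4Aux

/-- a balanced binary word starting with `a` with no factor `bb`
decomposes over `{a, ab}` and the desubstituted word is balanced. -/
theorem stmt4 (w : ℕ → Bool) (hbal : IsBalanced w) (h0 : w 0 = false)
    (hbb : ¬ Factor w [true, true]) :
    ∃ w' : ℕ → Bool, ApplyEq La w' w ∧ IsBalanced w' := by
  classical
  refine ⟨Stmt4Aux.dw w, Stmt4Aux.apply_eq h0 hbb, ?_⟩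
  by_contra hnb
  obtain ⟨t, ⟨k1, hf1⟩, ⟨k2, hf2⟩⟩ := Stmt4Aux.exists_pattern (Stmt4Aux.dw w) hnb
  have H1 := Stmt4Aux.image_factorAt h0 hbb _ k1 hf1
  have H2 := Stmt4Aux.image_factorAt h0 hbb _ k2 hf2
  have e1 : applyList La (false :: (t ++ [false])) ++ [false] =
      false :: (applyList La t ++ [false, false]) := by
    simp [applyList, La]
  have e2 : applyList La (true :: (t ++ [true])) ++ [false] =
      false :: (true :: (applyList La t ++ [false, true, false])) := by
    simp [applyList, La]
  rw [e1] at H1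
  rw [e2] at H2
  have H2' := Stmt4Aux.factorAt_tail H2
  have e3 : true :: (applyList La t ++ [false, true, false]) =
      (true :: (applyList La t ++ [false, true])) ++ [false] := by simp
  rw [e3] at H2'
  have H2'' := Stmt4Aux.factorAt_append_left H2'
  have hlen1 : (false :: (applyList La t ++ [false, false])).length =
      (true :: (applyList La t ++ [false, true])).length := by simp
  have hb := hbal true _ _ ⟨_, H1⟩ ⟨_, H2''⟩ hlen1
  have hc1 : (false :: (applyList La t ++ [false, false])).count true =
      (applyList La t).count true := by simp
  have hc2 : (true :: (applyList La t ++ [false, true])).count true =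
      (applyList La t).count true + 2 := by simp [List.count_cons]
  rw [hc1, hc2] at hb
  rw [abs_le] at hb
  push_cast at hb
  omega
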